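/- Let g be an (n+1)×(n+1) upper triangular real matrix with positive diagonal entries, bottom-right entry g_{n+1,n+1} = 1, and g ≠ I. Let ĝ be the induced affine automorphism of ℝ^n_lex given by ĝ(x)_i = Σ_{j≤n} g_{i,j} x_j + g_{i,n+1}. Then ĝ is rigid and hyperbolic if and only if g is essentially hyperbolic. -/

import Mathlib

/-- `Fin n → R` with the lexicographic order in which the **last** coordinate is the most
significant: `x < y` iff `x ≠ y` and `x i < y i` at the largest index `i` where `x` and `y`
differ. -/
def LexPow (R : Type*) (n : ℕ) : Type _ := Fin n → R

namespace LexPow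

variable {R : Type*} {n : ℕ}

/-- The identity bijection between `Fin n → R` and `LexPow R n`. -/
def of : (Fin n → R) ≃ LexPow R n := Equiv.refl _

instance : CoeFun (LexPow R n) (fun _ => Fin n → R) := ⟨fun x => x⟩

instance [AddCommGroup R] : AddCommGroup (LexPow R n) :=
  inferInstanceAs (AddCommGroup (Fin n → R))

/-- The map reversing coordinates, into the Mathlib lexicographic order (in which the *first*
coordinate is most significant). -/
def toRevLex (x : LexPow R n) : Lex (Fin n → R) :=
  toLex (fun i : Fin n => of.symm x (Fin.rev i))

theorem toRevLex_injective : Function.Injective (toRevLex (R := R) (n := n)) := by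
  intro a b hab
  refine of.symm.injective (funext fun i => ?_)
  have h := congrFun (congrArg ofLex hab) (Fin.rev i)
  simpa [toRevLex, Fin.rev_rev] using h

noncomputable instance [LinearOrder R] : LinearOrder (LexPow R n) :=
  LinearOrder.lift' (toRevLex (R := R) (n := n)) toRevLex_injective

instance [AddCommGroup R] [LinearOrder R] [IsOrderedAddMonoid R] :
    IsOrderedAddMonoid (LexPow R n) where
  add_le_add_left := fun a b hab c => by
    show toRevLex (a + c) ≤ toRevLex (b + c)
    have h : toRevLex a ≤ toRevLex b := hab
    exact add_le_add_left h (toRevLex c)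

end LexPow

/-- An orientation-preserving affine automorphism of a linearly ordered abelian group `Λ`:
an order-preserving bijection `g` of `Λ` admitting an order-preserving group automorphism
`dilation` (the dilation factor) with `g x - g y = dilation (x - y)` for all `x, y`. -/
structure OPAffineAut (Λ : Type*) [AddCommGroup Λ] [LinearOrder Λ] [IsOrderedAddMonoid Λ] extends Λ ≃ Λ where
  strictMono' : StrictMono toEquiv
  dilation : Λ ≃+ Λ
  dilation_strictMono : StrictMono dilation
  affine : ∀ x y : Λ, toEquiv x - toEquiv y = dilation (x - y)

namespace OPAffineAut

variable {Λ : Type*} [AddCommGroup Λ] [LinearOrder Λ] [IsOrderedAddMonoid Λ]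

instance : CoeFun (OPAffineAut Λ) (fun _ => Λ → Λ) := ⟨fun f => f.toEquiv⟩

theorem ext' {f g : OPAffineAut Λ} (h : ∀ x, f x = g x) : f = g := by
  have he : f.toEquiv = g.toEquiv := Equiv.ext h
  have hd : f.dilation = g.dilation := AddEquiv.ext fun x => by
    have hf := f.affine x 0
    have hg := g.affine x 0
    rw [sub_zero] at hf hg
    rw [← hf, ← hg]
    show f x - f 0 = g x - g 0
    rw [h x, h 0]
  cases f; cases g
  cases he; cases hd
  rfl

instance : Group (OPAffineAut Λ) where
  one :=
    { toEquiv := Equiv.refl Λ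
      strictMono' := strictMono_id
      dilation := AddEquiv.refl Λ
      dilation_strictMono := strictMono_id
      affine := fun _ _ => rfl }
  mul f g :=
    { toEquiv := g.toEquiv.trans f.toEquiv
      strictMono' := f.strictMono'.comp g.strictMono'
      dilation := g.dilation.trans f.dilation
      dilation_strictMono := f.dilation_strictMono.comp g.dilation_strictMono
      affine := fun x y => by
        simp only [Equiv.trans_apply, AddEquiv.trans_apply]
        rw [f.affine, g.affine] }
  inv f :=
    { toEquiv := f.toEquiv.symm
      strictMono' := fun a b hab => f.strictMono'.lt_iff_lt.1 (by
        simpa only [Equiv.apply_symm_apply] using hab)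
      dilation := f.dilation.symm
      dilation_strictMono := fun a b hab => f.dilation_strictMono.lt_iff_lt.1 (by
        simpa only [AddEquiv.apply_symm_apply] using hab)
      affine := fun x y => f.dilation.injective (by
        rw [AddEquiv.apply_symm_apply, ← f.affine, Equiv.apply_symm_apply,
          Equiv.apply_symm_apply]) }
  mul_assoc f g h := ext' fun _ => rfl
  one_mul f := ext' fun _ => rfl
  mul_one f := ext' fun _ => rfl
  inv_mul_cancel f := ext' fun x => f.toEquiv.symm_apply_apply x

@[simp] theorem mul_apply (f g : OPAffineAut Λ) (x : Λ) : (f * g) x = f (g x) := rfl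
@[simp] theorem one_apply (x : Λ) : (1 : OPAffineAut Λ) x = x := rfl
@[simp] theorem inv_apply (f : OPAffineAut Λ) (x : Λ) : f⁻¹ x = f.toEquiv.symm x := rfl

/-- An affine automorphism is *hyperbolic* if it has no fixed point. -/
def Hyperbolic (f : OPAffineAut Λ) : Prop := ∀ x : Λ, f x ≠ x

/-- An affine automorphism is *rigid* if for `ε = ±1`, whenever `f^ε` moves some point up,
it moves every point up. -/
def Rigid (f : OPAffineAut Λ) : Prop :=
  ∀ ε : ℤ, ε = 1 ∨ ε = -1 → (∃ x : Λ, x < (f ^ ε) x) → ∀ y : Λ, y < (f ^ ε) y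

end OPAffineAut

/-- An orientation-preserving affine action (a homomorphism into the group of
orientation-preserving affine automorphisms) is *free* if every nontrivial group element
acts without fixed points. -/
def AffineActionFree {G Λ : Type*} [Group G] [AddCommGroup Λ] [LinearOrder Λ] [IsOrderedAddMonoid Λ]
    (ρ : G →* OPAffineAut Λ) : Prop :=
  ∀ g : G, g ≠ 1 → ∀ x : Λ, ρ g x ≠ x

/-- An orientation-preserving affine action is *essentially free* if every nontrivial group
element acts as a rigid hyperbolic affine automorphism. -/
def AffineActionEssentiallyFree {G Λ : Type*} [Group G] [AddCommGroup Λ] [LinearOrder Λ] [IsOrderedAddMonoid Λ]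
    (ρ : G →* OPAffineAut Λ) : Prop :=
  ∀ g : G, g ≠ 1 → (ρ g).Rigid ∧ (ρ g).Hyperbolic

/-- `G` admits an essentially free orientation-preserving affine action on `Λ`. -/
def HasEssentiallyFreeAffineAction (G : Type*) [Group G] (Λ : Type*)
    [AddCommGroup Λ] [LinearOrder Λ] [IsOrderedAddMonoid Λ] : Prop :=
  ∃ ρ : G →* OPAffineAut Λ, AffineActionEssentiallyFree ρ

section Matrices

variable {R : Type*} {n : ℕ}

theorem diag_mul_of_triangular [CommRing R] {A B : Matrix (Fin n) (Fin n) R}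
    (hA : A.BlockTriangular id) (hB : B.BlockTriangular id) (i : Fin n) :
    (A * B) i i = A i i * B i i := by
  rw [Matrix.mul_apply]
  apply Finset.sum_eq_single i
  · intro k _ hk
    rcases lt_or_gt_of_ne hk with h | h
    · rw [hA (show (id : Fin n → Fin n) k < id i from h), zero_mul]
    · rw [hB (show (id : Fin n → Fin n) i < id k from h), mul_zero]
  · intro h; exact absurd (Finset.mem_univ i) h

/-- The group `UT(n,R)` of upper triangular `n × n` matrices over `R` with all diagonal
entries equal to `1`, realised as a subgroup of the group of units of the matrix ring. -/
def UT (n : ℕ) (R : Type*) [CommRing R] : Subgroup (Matrix (Fin n) (Fin n) R)ˣ where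
  carrier := {A | (∀ i j : Fin n, j < i → (A : Matrix (Fin n) (Fin n) R) i j = 0) ∧
    ∀ i : Fin n, (A : Matrix (Fin n) (Fin n) R) i i = 1}
  one_mem' := by
    refine ⟨fun i j hij => ?_, fun i => ?_⟩
    · simp [Matrix.one_apply, (ne_of_lt hij).symm]
    · simp
  mul_mem' := by
    rintro A B ⟨hA1, hA2⟩ ⟨hB1, hB2⟩
    have hA : (A : Matrix (Fin n) (Fin n) R).BlockTriangular id := fun i j h => hA1 i j h
    have hB : (B : Matrix (Fin n) (Fin n) R).BlockTriangular id := fun i j h => hB1 i j h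
    refine ⟨fun i j hij => ?_, fun i => ?_⟩
    · exact (hA.mul hB) (show (id : Fin n → Fin n) j < id i from hij)
    · rw [Units.val_mul, diag_mul_of_triangular hA hB, hA2, hB2, one_mul]
  inv_mem' := by
    rintro A ⟨hA1, hA2⟩
    have hA : (A : Matrix (Fin n) (Fin n) R).BlockTriangular id := fun i j h => hA1 i j h
    haveI := A.invertible
    have hAinv : ((A : Matrix (Fin n) (Fin n) R)⁻¹).BlockTriangular id :=
      Matrix.blockTriangular_inv_of_blockTriangular hA
    have hcoe : ((A⁻¹ : (Matrix (Fin n) (Fin n) R)ˣ) : Matrix (Fin n) (Fin n) R)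
        = (A : Matrix (Fin n) (Fin n) R)⁻¹ := Matrix.coe_units_inv A
    refine ⟨fun i j hij => ?_, fun i => ?_⟩
    · rw [hcoe]; exact hAinv (show (id : Fin n → Fin n) j < id i from hij)
    · have h1 : ((A : Matrix (Fin n) (Fin n) R) * (A : Matrix (Fin n) (Fin n) R)⁻¹) i i = 1 := by
        rw [Matrix.mul_inv_of_invertible]; simp
      rw [diag_mul_of_triangular hA hAinv, hA2, one_mul] at h1
      rw [hcoe, h1]

/-- The group `T*(n,R)` of upper triangular `n × n` matrices over a linearly ordered field `R`
with positive diagonal entries, realised as a subgroup of the units of the matrix ring. -/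
def Tstar (n : ℕ) (R : Type*) [Field R] [LinearOrder R] [IsStrictOrderedRing R] : Subgroup (Matrix (Fin n) (Fin n) R)ˣ where
  carrier := {A | (∀ i j : Fin n, j < i → (A : Matrix (Fin n) (Fin n) R) i j = 0) ∧
    ∀ i : Fin n, 0 < (A : Matrix (Fin n) (Fin n) R) i i}
  one_mem' := by
    refine ⟨fun i j hij => ?_, fun i => ?_⟩
    · simp [Matrix.one_apply, (ne_of_lt hij).symm]
    · simp
  mul_mem' := by
    rintro A B ⟨hA1, hA2⟩ ⟨hB1, hB2⟩
    have hA : (A : Matrix (Fin n) (Fin n) R).BlockTriangular id := fun i j h => hA1 i j h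
    have hB : (B : Matrix (Fin n) (Fin n) R).BlockTriangular id := fun i j h => hB1 i j h
    refine ⟨fun i j hij => ?_, fun i => ?_⟩
    · exact (hA.mul hB) (show (id : Fin n → Fin n) j < id i from hij)
    · rw [Units.val_mul, diag_mul_of_triangular hA hB]
      exact mul_pos (hA2 i) (hB2 i)
  inv_mem' := by
    rintro A ⟨hA1, hA2⟩
    have hA : (A : Matrix (Fin n) (Fin n) R).BlockTriangular id := fun i j h => hA1 i j h
    haveI := A.invertible
    have hAinv : ((A : Matrix (Fin n) (Fin n) R)⁻¹).BlockTriangular id :=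
      Matrix.blockTriangular_inv_of_blockTriangular hA
    have hcoe : ((A⁻¹ : (Matrix (Fin n) (Fin n) R)ˣ) : Matrix (Fin n) (Fin n) R)
        = (A : Matrix (Fin n) (Fin n) R)⁻¹ := Matrix.coe_units_inv A
    refine ⟨fun i j hij => ?_, fun i => ?_⟩
    · rw [hcoe]; exact hAinv (show (id : Fin n → Fin n) j < id i from hij)
    · have h1 : ((A : Matrix (Fin n) (Fin n) R) * (A : Matrix (Fin n) (Fin n) R)⁻¹) i i = 1 := by
        rw [Matrix.mul_inv_of_invertible]; simp
      rw [diag_mul_of_triangular hA hAinv] at h1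
      rw [hcoe]
      rcases lt_trichotomy ((A : Matrix (Fin n) (Fin n) R)⁻¹ i i) 0 with h | h | h
      · exact absurd h1 (by nlinarith [hA2 i])
      · rw [h, mul_zero] at h1; exact absurd h1 zero_ne_one
      · exact h

/-- The last index of `Fin N` (any element of `Fin N` witnesses `0 < N`). -/
def lastOf {N : ℕ} (r : Fin N) : Fin N := ⟨N - 1, Nat.sub_lt r.pos Nat.one_pos⟩

/-- A square matrix `g` (upper triangular, with positive diagonal and bottom-right entry `1`)
is *essentially hyperbolic* if `g ≠ 1` and there is a row index `r` which is not the last row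
such that `(g-1)_{r,N} ≠ 0` (where `N` is the last column) and every nonzero entry of `g - 1`
lies either in a row strictly above `r`, or at position `(r, N)`. -/
def EssentiallyHyperbolic {N : ℕ} {R : Type*} [CommRing R]
    (g : Matrix (Fin N) (Fin N) R) : Prop :=
  g ≠ 1 ∧ ∃ r : Fin N, (r : ℕ) + 1 < N ∧ (g - 1) r (lastOf r) ≠ 0 ∧
    ∀ i j : Fin N, (g - 1) i j ≠ 0 → i < r ∨ (i = r ∧ j = lastOf r)

end Matrices

/-- The group of order-preserving additive automorphisms of a linearly ordered abelian
group `Λ`, as a subgroup of `AddAut Λ`. -/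
def orderAddAut (Λ : Type*) [AddCommGroup Λ] [LinearOrder Λ] [IsOrderedAddMonoid Λ] : Subgroup (Multiplicative (AddAut Λ)) where
  carrier := {f | StrictMono ⇑(Multiplicative.toAdd f : AddAut Λ)}
  one_mem' := strictMono_id
  mul_mem' := by
    intro f g hf hg a b hab
    exact hf (hg hab)
  inv_mem' := by
    intro f hf a b hab
    exact hf.lt_iff_lt.1 (by simpa using hab)

theorem LexPow.lt_of_coord {n : ℕ} {a b : LexPow ℝ n} (k : Fin n)
    (h1 : ∀ j, k < j → a j = b j) (h2 : a k < b k) : a < b := by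
  show LexPow.toRevLex a < LexPow.toRevLex b
  show Pi.Lex (· < ·) (@fun _ => (· < ·)) (fun i : Fin n => a (Fin.rev i)) (fun i : Fin n => b (Fin.rev i))
  refine ⟨k.rev, fun j hj => ?_, ?_⟩
  · refine h1 _ ?_
    have hj' : (j : ℕ) < n - ((k : ℕ) + 1) := by
      simpa [Fin.lt_def, Fin.val_rev] using hj
    have hk := k.isLt
    have hjn := j.isLt
    simp only [Fin.lt_def, Fin.val_rev]
    omega
  · simpa [Fin.rev_rev] using h2
/-- Let `g` be an `(n+1) × (n+1)` upper triangular real matrix with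
positive diagonal entries, bottom-right entry `1`, and `g ≠ 1`, and let `f` be the induced
affine automorphism of `ℝ^n_lex`, `f(x)_i = ∑_j g_{i,j} x_j + g_{i,n+1}`. Then `f` is rigid
and hyperbolic if and only if `g` is essentially hyperbolic. -/
theorem rigid_and_hyperbolic_iff_essentiallyHyperbolic (n : ℕ)
    (g : Matrix (Fin (n + 1)) (Fin (n + 1)) ℝ)
    (hut : ∀ i j : Fin (n + 1), j < i → g i j = 0)
    (hpos : ∀ i : Fin (n + 1), 0 < g i i)
    (hbr : g (Fin.last n) (Fin.last n) = 1)
    (hne : g ≠ 1)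
    (f : OPAffineAut (LexPow ℝ n))
    (hf : ∀ (x : Fin n → ℝ) (i : Fin n),
      LexPow.of.symm (f (LexPow.of x)) i =
        (∑ j : Fin n, g i.castSucc j.castSucc * x j) + g i.castSucc (Fin.last n)) :
    (f.Rigid ∧ f.Hyperbolic) ↔ EssentiallyHyperbolic g := by
  classical
  -- restate hf
  have key : ∀ (x : Fin n → ℝ) (i : Fin n), (f (LexPow.of x)) i =
      (∑ j : Fin n, g i.castSucc j.castSucc * x j) + g i.castSucc (Fin.last n) := hf
  have hcsl : ∀ i : Fin n, i.castSucc ≠ Fin.last n := fun i => (Fin.castSucc_lt_last i).ne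
  have hone_last : ∀ i : Fin n, (1 : Matrix (Fin (n+1)) (Fin (n+1)) ℝ) i.castSucc (Fin.last n) = 0 :=
    fun i => Matrix.one_apply_ne (hcsl i)
  have hone_cs : ∀ i j : Fin n, (1 : Matrix (Fin (n+1)) (Fin (n+1)) ℝ) i.castSucc j.castSucc
      = if i = j then 1 else 0 := by
    intro i j
    simp [Matrix.one_apply, Fin.castSucc_inj]
  -- a row that agrees with the identity on the square part gives a translation
  have hsum : ∀ (x : Fin n → ℝ) (i : Fin n),
      (∀ j : Fin n, g i.castSucc j.castSucc = if i = j then 1 else 0) →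
      (f (LexPow.of x)) i = x i + g i.castSucc (Fin.last n) := by
    intro x i h
    rw [key]
    congr 1
    simp [h, ite_mul, Finset.sum_ite_eq]
  -- the last row of `g` agrees with the identity
  have hlastid : ∀ j : Fin (n+1), g (Fin.last n) j
      = (1 : Matrix (Fin (n+1)) (Fin (n+1)) ℝ) (Fin.last n) j := by
    intro j
    by_cases hj : j = Fin.last n
    · subst hj; simp [hbr]
    · have hjl : j < Fin.last n := by
        have := j.isLt
        have : (j : ℕ) ≠ n := fun h => hj (Fin.ext (by simp [h]))
        simp only [Fin.lt_def, Fin.val_last]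
        omega
      rw [hut _ _ hjl, Matrix.one_apply_ne (Ne.symm hj)]
  constructor
  · -- rigid (∧ hyperbolic) → essentially hyperbolic
    rintro ⟨hR, -⟩
    by_contra hEH
    -- the set of rows where g differs from the identity
    set S : Finset (Fin (n+1)) := Finset.univ.filter
      (fun i => ∃ j, g i j ≠ (1 : Matrix (Fin (n+1)) (Fin (n+1)) ℝ) i j) with hSdef
    have hSne : S.Nonempty := by
      by_contra h
      apply hne
      ext i j
      by_contra hij
      exact h ⟨i, Finset.mem_filter.mpr ⟨Finset.mem_univ _, j, hij⟩⟩
    set r0 : Fin (n+1) := S.max' hSne with hr0def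
    have hr0mem : ∃ j, g r0 j ≠ (1 : Matrix (Fin (n+1)) (Fin (n+1)) ℝ) r0 j := by
      have := S.max'_mem hSne
      exact (Finset.mem_filter.mp this).2
    have habove : ∀ i : Fin (n+1), r0 < i → ∀ j, g i j
        = (1 : Matrix (Fin (n+1)) (Fin (n+1)) ℝ) i j := by
      intro i hi j
      by_contra hij
      exact absurd (S.le_max' i (Finset.mem_filter.mpr ⟨Finset.mem_univ _, j, hij⟩))
        (not_le.mpr hi)
    have hr0last : r0 ≠ Fin.last n := by
      intro h
      obtain ⟨j, hj⟩ := hr0mem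
      rw [h] at hj
      exact hj (hlastid j)
    have hr0n : (r0 : ℕ) < n := by
      have h1 := r0.isLt
      have h2 : (r0 : ℕ) ≠ n := fun h => hr0last (Fin.ext (by simp [h]))
      omega
    set r0' : Fin n := ⟨r0, hr0n⟩ with hr0'def
    have hcr : r0'.castSucc = r0 := Fin.ext rfl
    -- rows strictly above r0' (as Fin n rows) are identity, so f fixes those coordinates
    have hfix : ∀ (x : Fin n → ℝ) (i : Fin n), r0' < i → (f (LexPow.of x)) i = x i := by
      intro x i hi
      have hlt : r0 < i.castSucc := by rw [← hcr]; exact Fin.castSucc_lt_castSucc_iff.mpr hi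
      have hrow := habove i.castSucc hlt
      rw [hsum x i (fun j => by rw [hrow j.castSucc, hone_cs]), hrow (Fin.last n), hone_last,
        add_zero]
    -- dichotomy: either row r0 has a nonzero off-translation entry, or g is ess. hyperbolic
    by_cases hj0 : ∃ j0 : Fin n, g r0 j0.castSucc ≠ (1 : Matrix (Fin (n+1)) (Fin (n+1)) ℝ) r0 j0.castSucc
    · obtain ⟨j0, hj0⟩ := hj0
      set c : ℝ := g r0 j0.castSucc - (if r0' = j0 then 1 else 0) with hcdef
      have hc : c ≠ 0 := by
        rw [hcdef]
        refine sub_ne_zero.mpr ?_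
        rw [← hcr] at hj0 ⊢
        rwa [hone_cs] at hj0
      set d : ℝ := g r0 (Fin.last n) with hddef
      -- the test points
      set xt : ℝ → Fin n → ℝ := fun t j => if j = j0 then t else 0 with hxtdef
      have hfr : ∀ t : ℝ, (f (LexPow.of (xt t))) r0' = g r0 j0.castSucc * t + d := by
        intro t
        rw [key]
        congr 1
        rw [hcr]
        simp [hxtdef, mul_ite, Finset.sum_ite_eq']
      have hdiff : ∀ t : ℝ, (f (LexPow.of (xt t))) r0' - xt t r0' = c * t + d := by
        intro t
        rw [hfr]
        have : xt t r0' = (if r0' = j0 then (1:ℝ) else 0) * t := by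
          simp only [hxtdef, ite_mul, one_mul, zero_mul]
        rw [this, hcdef]
        ring
      set t1 : ℝ := (1 - d) / c with ht1def
      set t2 : ℝ := (-1 - d) / c with ht2def
      have hd1 : c * t1 + d = 1 := by rw [ht1def]; field_simp; ring
      have hd2 : c * t2 + d = -1 := by rw [ht2def]; field_simp; ring
      have h1 : LexPow.of (xt t1) < f (LexPow.of (xt t1)) := by
        refine LexPow.lt_of_coord r0' (fun j hj => (hfix (xt t1) j hj).symm) ?_
        have := hdiff t1
        rw [hd1] at this
        show xt t1 r0' < (f (LexPow.of (xt t1))) r0'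
        linarith
      have h2 : f (LexPow.of (xt t2)) < LexPow.of (xt t2) := by
        refine LexPow.lt_of_coord r0' (fun j hj => hfix (xt t2) j hj) ?_
        have := hdiff t2
        rw [hd2] at this
        show (f (LexPow.of (xt t2))) r0' < xt t2 r0'
        linarith
      have := hR 1 (Or.inl rfl) ⟨LexPow.of (xt t1), by rw [zpow_one]; exact h1⟩
        (LexPow.of (xt t2))
      rw [zpow_one] at this
      exact lt_asymm h2 this
    · -- essentially hyperbolic : contradiction with hEH
      push_neg at hj0
      apply hEH
      refine ⟨hne, r0, ?_, ?_, ?_⟩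
      · simpa using Nat.succ_lt_succ hr0n
      · have hlastOf : lastOf r0 = Fin.last n := Fin.ext (by simp [lastOf])
        rw [hlastOf]
        obtain ⟨j, hj⟩ := hr0mem
        have hjlast : j = Fin.last n := by
          by_contra hjn
          have hn : (j : ℕ) < n := by
            have := j.isLt
            have : (j : ℕ) ≠ n := fun h => hjn (Fin.ext (by simp [h]))
            omega
          have : j = (⟨j, hn⟩ : Fin n).castSucc := Fin.ext rfl
          rw [this] at hj
          exact hj (hj0 _)
        rw [hjlast] at hj
        simpa [Matrix.sub_apply, Matrix.one_apply_ne (hcsl r0')] using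
          (sub_ne_zero.mpr (by rwa [Matrix.one_apply_ne hr0last] at hj ⊢))
      · intro i j hij
        have hij' : g i j ≠ (1 : Matrix (Fin (n+1)) (Fin (n+1)) ℝ) i j := by
          intro h
          apply hij
          simp [Matrix.sub_apply, h]
        have hile : i ≤ r0 := S.le_max' i (Finset.mem_filter.mpr ⟨Finset.mem_univ _, j, hij'⟩)
        rcases lt_or_eq_of_le hile with h | h
        · exact Or.inl h
        · refine Or.inr ⟨h, ?_⟩
          rw [h] at hij'
          have hlastOf : lastOf r0 = Fin.last n := Fin.ext (by simp [lastOf])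
          rw [hlastOf]
          by_contra hjn
          have hn : (j : ℕ) < n := by
            have := j.isLt
            have : (j : ℕ) ≠ n := fun h => hjn (Fin.ext (by simp [h]))
            omega
          have : j = (⟨j, hn⟩ : Fin n).castSucc := Fin.ext rfl
          rw [this] at hij'
          exact hij' (hj0 _)
  · -- essentially hyperbolic → rigid and hyperbolic
    rintro ⟨-, r, hrlt, hbne, hrows⟩
    have hrn : (r : ℕ) < n := by omega
    set r' : Fin n := ⟨r, hrn⟩ with hr'def
    have hcr : r'.castSucc = r := Fin.ext rfl
    have hrlast : r ≠ Fin.last n := by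
      intro h
      rw [h] at hrlt
      simp at hrlt
    have hlastOf : lastOf r = Fin.last n := Fin.ext (by simp [lastOf])
    set b : ℝ := g r (Fin.last n) with hbdef
    have hb : b ≠ 0 := by
      rw [hlastOf] at hbne
      simpa [Matrix.sub_apply, Matrix.one_apply_ne hrlast] using hbne
    -- rows strictly above r are identity rows
    have habove : ∀ i : Fin (n+1), r < i → ∀ j, g i j
        = (1 : Matrix (Fin (n+1)) (Fin (n+1)) ℝ) i j := by
      intro i hi j
      by_contra hij
      have : (g - 1) i j ≠ 0 := by
        simp [Matrix.sub_apply, sub_ne_zero.mpr hij]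
      rcases hrows i j this with h | ⟨h, -⟩
      · exact absurd (h.trans hi) (lt_irrefl i)
      · rw [h] at hi; exact lt_irrefl r hi
    -- row r is identity on the square part
    have hrowr : ∀ j : Fin n, g r j.castSucc = if r' = j then 1 else 0 := by
      intro j
      have h0 : (g - 1) r j.castSucc = 0 := by
        by_contra h
        rcases hrows r j.castSucc h with h' | ⟨-, h'⟩
        · exact lt_irrefl r h'
        · rw [hlastOf] at h'; exact hcsl j h'
      have : g r j.castSucc = (1 : Matrix (Fin (n+1)) (Fin (n+1)) ℝ) r j.castSucc := by
        have := sub_eq_zero.mp (by simpa [Matrix.sub_apply] using h0)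
        exact this
      rw [this, ← hcr, hone_cs]
    have hfix : ∀ (x : Fin n → ℝ) (i : Fin n), r' < i → (f (LexPow.of x)) i = x i := by
      intro x i hi
      have hlt : r < i.castSucc := by rw [← hcr]; exact Fin.castSucc_lt_castSucc_iff.mpr hi
      have hrow := habove i.castSucc hlt
      rw [hsum x i (fun j => by rw [hrow j.castSucc, hone_cs]), hrow (Fin.last n), hone_last,
        add_zero]
    have hfr : ∀ x : Fin n → ℝ, (f (LexPow.of x)) r' = x r' + b := by
      intro x
      exact hsum x r' (fun j => by rw [hcr, hrowr j])
    -- now split on the sign of b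
    rcases hb.lt_or_gt with hbneg | hbpos
    · -- b < 0 : f moves every point down
      have hall : ∀ x : LexPow ℝ n, f x < x := by
        intro x
        refine LexPow.lt_of_coord r' (fun j hj => hfix x j hj) ?_
        show (f (LexPow.of x)) r' < x r'
        have hfx := hfr x
        linarith
      refine ⟨?_, fun x => (hall x).ne⟩
      intro ε hε hex y
      rcases hε with h | h
      · subst h
        rw [zpow_one] at hex
        obtain ⟨x, hx⟩ := hex
        exact absurd hx (not_lt.mpr (hall x).le)
      · subst h
        rw [zpow_neg_one]
        show y < f.toEquiv.symm y
        refine f.strictMono'.lt_iff_lt.mp ?_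
        rw [Equiv.apply_symm_apply]
        exact hall y
    · -- b > 0 : f moves every point up
      have hall : ∀ x : LexPow ℝ n, x < f x := by
        intro x
        refine LexPow.lt_of_coord r' (fun j hj => (hfix x j hj).symm) ?_
        show x r' < (f (LexPow.of x)) r'
        have hfx := hfr x
        linarith
      refine ⟨?_, fun x => (hall x).ne'⟩
      intro ε hε hex y
      rcases hε with h | h
      · subst h
        rw [zpow_one]
        exact hall y
      · subst h
        rw [zpow_neg_one] at hex
        obtain ⟨x, hx⟩ := hex
        exfalso
        have : f x < x := by
          have := f.strictMono' (show x < f.toEquiv.symm x from hx)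
          rwa [Equiv.apply_symm_apply] at this
        exact lt_asymm this (hall x)
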